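/- Let P be a d-dimensional prismatoid with top facet T and bottom facet B. Then T and B are Minkowski equivalent. -/

import Mathlib

open Pointwise

noncomputable section

/-- A point of `ℝ^d` is a *lattice point* if all its coordinates are integers. -/
def IsLatticePoint {d : ℕ} (x : Fin d → ℝ) : Prop :=
  ∀ i, ∃ n : ℤ, x i = (n : ℝ)

/-- A *polytope* is the convex hull of finitely many points. -/
def IsPolytope {E : Type*} [AddCommGroup E] [Module ℝ E] (P : Set E) : Prop :=
  ∃ V : Finset E, P = convexHull ℝ (V : Set E)

/-- A *lattice polytope* in `ℝ^d` is the convex hull of finitely many lattice points. -/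
def IsLatticePolytope {d : ℕ} (P : Set (Fin d → ℝ)) : Prop :=
  ∃ V : Finset (Fin d → ℝ), (∀ v ∈ V, IsLatticePoint v) ∧
    P = convexHull ℝ (V : Set (Fin d → ℝ))

/-- The subset of `P` on which the linear functional `u` is maximized. -/
def maxFace {E : Type*} [AddCommGroup E] [Module ℝ E] (P : Set E) (u : E →ₗ[ℝ] ℝ) : Set E :=
  {x ∈ P | ∀ y ∈ P, u y ≤ u x}

/-- `F` is a face of `P` if it is the maximizing set of some linear functional on `P`. -/
def IsFaceOf {E : Type*} [AddCommGroup E] [Module ℝ E] (P F : Set E) : Prop :=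
  ∃ u : E →ₗ[ℝ] ℝ, F = maxFace P u

/-- The dimension of a subset: the rank of the direction of its affine span. -/
def dimSet {E : Type*} [AddCommGroup E] [Module ℝ E] (F : Set E) : ℕ :=
  Module.finrank ℝ (affineSpan ℝ F).direction

/-- Two sets are parallel if the directions (linear parts) of their affine spans coincide. -/
def AreParallel {E : Type*} [AddCommGroup E] [Module ℝ E] (F G : Set E) : Prop :=
  (affineSpan ℝ F).direction = (affineSpan ℝ G).direction

/-- A facet is a face of codimension one. -/
def IsFacetOf {E : Type*} [AddCommGroup E] [Module ℝ E] (P F : Set E) : Prop :=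
  IsFaceOf P F ∧ dimSet F + 1 = dimSet P

/-- A vertex of `P` is a point whose singleton is a face of `P`. -/
def IsVertexOf {E : Type*} [AddCommGroup E] [Module ℝ E] (P : Set E) (v : E) : Prop :=
  IsFaceOf P {v}

/-- An edge of `P` is a one-dimensional face of `P`. -/
def IsEdgeOf {E : Type*} [AddCommGroup E] [Module ℝ E] (P F : Set E) : Prop :=
  IsFaceOf P F ∧ dimSet F = 1

/-- A polytope in `ℝ^d` is simple if every vertex is contained in exactly `d` edges. -/
def IsSimplePolytope {d : ℕ} (P : Set (Fin d → ℝ)) : Prop :=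
  ∀ v : Fin d → ℝ, IsVertexOf P v →
    {F : Set (Fin d → ℝ) | IsEdgeOf P F ∧ v ∈ F}.ncard = d

/-- An integer vector is primitive if it is not a nontrivial integer multiple of
another integer vector (in particular it is nonzero). -/
def IsPrimitiveVector {d : ℕ} (u : Fin d → ℤ) : Prop :=
  ∀ (k : ℤ) (w : Fin d → ℤ), u = k • w → IsUnit k

/-- `u` is a primitive edge direction of `P` at the vertex `v`: a primitive lattice vector
pointing from `v` along an edge of `P` incident to `v`. -/
def IsPrimitiveEdgeDirectionAt {d : ℕ} (P : Set (Fin d → ℝ)) (v : Fin d → ℝ)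
    (u : Fin d → ℤ) : Prop :=
  IsPrimitiveVector u ∧
    ∃ F : Set (Fin d → ℝ), IsEdgeOf P F ∧ v ∈ F ∧
      ∃ ε : ℝ, 0 < ε ∧ (v + ε • fun i => (u i : ℝ)) ∈ F

/-- A lattice polytope is smooth if it is simple and, at each vertex, the primitive
edge directions form a `ℤ`-basis of `ℤ^d`. -/
def IsSmoothPolytope {d : ℕ} (P : Set (Fin d → ℝ)) : Prop :=
  IsLatticePolytope P ∧ IsSimplePolytope P ∧
    ∀ v : Fin d → ℝ, IsVertexOf P v →
      ∃ b : Module.Basis (Fin d) ℤ (Fin d → ℤ), ∀ i, IsPrimitiveEdgeDirectionAt P v (b i)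

/-- The unit cube `[0,1]^d`. -/
def unitCube (d : ℕ) : Set (Fin d → ℝ) := {x | ∀ i, x i ∈ Set.Icc (0 : ℝ) 1}

/-- A `d`-dimensional combinatorial cube: a `d`-dimensional lattice polytope whose face
poset is order-isomorphic to the face poset of the unit cube `[0,1]^d`. -/
def IsCombinatorialCube (d : ℕ) (C : Set (Fin d → ℝ)) : Prop :=
  IsLatticePolytope C ∧ dimSet C = d ∧
    Nonempty ({F : Set (Fin d → ℝ) // IsFaceOf (unitCube d) F} ≃o
              {F : Set (Fin d → ℝ) // IsFaceOf C F})

/-- The pair `(P, Q)` has the Integer Decomposition Property: every lattice point of the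
Minkowski sum `P + Q` is a sum of a lattice point of `P` and a lattice point of `Q`. -/
def IsIDPPair {d : ℕ} (P Q : Set (Fin d → ℝ)) : Prop :=
  ∀ x : Fin d → ℝ, IsLatticePoint x → x ∈ P + Q →
    ∃ p ∈ P, ∃ q ∈ Q, IsLatticePoint p ∧ IsLatticePoint q ∧ x = p + q

/-- `P` and `Q` are Minkowski equivalent (have the same normal fan): two linear functionals
are maximized on the same face of `P` if and only if they are maximized on the same face
of `Q`. -/
def MinkowskiEquivalent {E : Type*} [AddCommGroup E] [Module ℝ E] (P Q : Set E) : Prop :=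
  ∀ u v : E →ₗ[ℝ] ℝ, maxFace P u = maxFace P v ↔ maxFace Q u = maxFace Q v

/-- `P` is a `d`-dimensional prismatoid with top facet `T` and bottom facet `B`: a
`d`-dimensional lattice polytope whose face poset is order-isomorphic to the face poset of
a prism `Q × [0,1]` over a `(d-1)`-dimensional polytope `Q`, where `T` and `B` are the
faces corresponding to `Q × {1}` and `Q × {0}` respectively, and `T` and `B` are parallel. -/
def IsPrismatoid (d : ℕ) (P T B : Set (Fin d → ℝ)) : Prop :=
  IsLatticePolytope P ∧ dimSet P = d ∧
    ∃ Q : Set (Fin (d - 1) → ℝ), IsPolytope Q ∧ dimSet Q = d - 1 ∧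
      ∃ φ : {F : Set ((Fin (d - 1) → ℝ) × ℝ) // IsFaceOf (Q ×ˢ Set.Icc (0 : ℝ) 1) F} ≃o
            {F : Set (Fin d → ℝ) // IsFaceOf P F},
        (∃ hT : IsFaceOf (Q ×ˢ Set.Icc (0 : ℝ) 1) (Q ×ˢ ({1} : Set ℝ)),
            (φ ⟨Q ×ˢ ({1} : Set ℝ), hT⟩).1 = T) ∧
        (∃ hB : IsFaceOf (Q ×ˢ Set.Icc (0 : ℝ) 1) (Q ×ˢ ({0} : Set ℝ)),
            (φ ⟨Q ×ˢ ({0} : Set ℝ), hB⟩).1 = B) ∧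
        AreParallel T B

/-- The face `F_I^J` of the unit cube given by disjoint index sets `I` (coordinates pinned
to `0`) and `J` (coordinates pinned to `1`). -/
def cubeFace (d : ℕ) (I J : Set (Fin d)) : Set (Fin d → ℝ) :=
  {x ∈ unitCube d | (∀ k ∈ I, x k = 0) ∧ (∀ k ∈ J, x k = 1)}

/-- Under a fixed order isomorphism `φ` from the face poset of the unit cube to the face
poset of `C`, the set `F` is the face of `C` corresponding to the face `F_I^J` of the
unit cube. -/
def IsCubeFaceImage {d : ℕ} {C : Set (Fin d → ℝ)}
    (φ : {F : Set (Fin d → ℝ) // IsFaceOf (unitCube d) F} ≃o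
         {F : Set (Fin d → ℝ) // IsFaceOf C F})
    (I J : Set (Fin d)) (F : Set (Fin d → ℝ)) : Prop :=
  ∃ h : IsFaceOf (unitCube d) (cubeFace d I J), (φ ⟨cubeFace d I J, h⟩).1 = F

/-- The last coordinate index of `Fin d` (for `0 < d`). -/
def lastIdx (d : ℕ) (hd : 0 < d) : Fin d := ⟨d - 1, Nat.sub_lt hd Nat.one_pos⟩

/-- The linear functional `x ↦ ⟨y, x⟩ = ∑ i, y i * x i` on `ℝ^d`. -/
def dotL {d : ℕ} (y : Fin d → ℝ) : (Fin d → ℝ) →ₗ[ℝ] ℝ :=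
  ∑ i, y i • LinearMap.proj (R := ℝ) (φ := fun _ : Fin d => ℝ) i

section helpers

variable {E : Type*} [AddCommGroup E] [Module ℝ E]

theorem maxFace_subset (P : Set E) (u : E →ₗ[ℝ] ℝ) : maxFace P u ⊆ P :=
  fun _ hx => hx.1

/-- The sum trick: a nonempty intersection of two faces is the face of the sum functional. -/
theorem maxFace_inter {P : Set E} {a b : E →ₗ[ℝ] ℝ} {x : E}
    (hxa : x ∈ maxFace P a) (hxb : x ∈ maxFace P b) :
    maxFace P a ∩ maxFace P b = maxFace P (a + b) := by
  ext z
  constructor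
  · rintro ⟨⟨hzP, hza⟩, ⟨_, hzb⟩⟩
    exact ⟨hzP, fun y hy => by
      have := hza y hy; have := hzb y hy
      simp only [LinearMap.add_apply]; linarith⟩
  · rintro ⟨hzP, hz⟩
    have h1 : a z ≤ a x := hxa.2 z hzP
    have h2 : b z ≤ b x := hxb.2 z hzP
    have h3 : a x + b x ≤ a z + b z := by
      have := hz x hxa.1
      simpa [LinearMap.add_apply] using this
    have hza : a z = a x := le_antisymm h1 (by linarith)
    have hzb : b z = b x := le_antisymm h2 (by linarith)
    refine ⟨⟨hzP, fun y hy => (hxa.2 y hy).trans hza.ge⟩,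
            ⟨hzP, fun y hy => (hxb.2 y hy).trans hzb.ge⟩⟩

theorem isFaceOf_inter {P F G : Set E} (hF : IsFaceOf P F) (hG : IsFaceOf P G)
    (hne : (F ∩ G).Nonempty) : IsFaceOf P (F ∩ G) := by
  obtain ⟨a, rfl⟩ := hF
  obtain ⟨b, rfl⟩ := hG
  obtain ⟨x, hxa, hxb⟩ := hne
  exact ⟨a + b, maxFace_inter hxa hxb⟩

/-- If the global face meets a subset `T` of `P`, its intersection with `T` is the
maximizing set over `T`. -/
theorem maxFace_inter_of_mem {P T : Set E} (hTP : T ⊆ P) {f : E →ₗ[ℝ] ℝ} {x : E}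
    (hx : x ∈ maxFace P f ∩ T) : maxFace P f ∩ T = maxFace T f := by
  ext z
  constructor
  · rintro ⟨⟨hzP, hz⟩, hzT⟩
    exact ⟨hzT, fun y hy => hz y (hTP hy)⟩
  · rintro ⟨hzT, hz⟩
    have hxf : f x ≤ f z := hz x hx.2
    exact ⟨⟨hTP hzT, fun y hy => (hx.1.2 y hy).trans hxf⟩, hzT⟩

/-- Adding a functional constant on `T` doesn't change the max face over `T`. -/
theorem maxFace_add_const {T : Set E} {c : E →ₗ[ℝ] ℝ}
    (hc : ∀ x ∈ T, ∀ y ∈ T, c x = c y) (u : E →ₗ[ℝ] ℝ) (s : ℝ) :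
    maxFace T (u + s • c) = maxFace T u := by
  ext z
  simp only [maxFace, Set.mem_setOf_eq, LinearMap.add_apply, LinearMap.smul_apply,
    smul_eq_mul]
  constructor
  · rintro ⟨hzT, hz⟩
    exact ⟨hzT, fun y hy => by
      have h1 := hz y hy; have hcc := hc y hy z hzT; rw [hcc] at h1; linarith⟩
  · rintro ⟨hzT, hz⟩
    exact ⟨hzT, fun y hy => by
      have h1 := hz y hy; have hcc := hc y hy z hzT; rw [hcc]; linarith⟩

/-- A linear functional constant on a set vanishes on the direction of its affine span. -/
theorem constant_on_of_parallel {S S' : Set E} {w : E →ₗ[ℝ] ℝ}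
    (hpar : AreParallel S S') (hc : ∀ x ∈ S, ∀ y ∈ S, w x = w y) :
    ∀ x ∈ S', ∀ y ∈ S', w x = w y := by
  have hker : ∀ z ∈ vectorSpan ℝ S, w z = 0 := by
    intro z hz
    rw [vectorSpan_def] at hz
    induction hz using Submodule.span_induction with
    | mem z hz =>
        obtain ⟨a, ha, b, hb, rfl⟩ := hz
        simp only [vsub_eq_sub, map_sub]
        rw [hc a ha b hb]; ring
    | zero => simp
    | add x y _ _ hx hy => simp [map_add, hx, hy]
    | smul r x _ hx => simp [map_smul, hx]
  intro x hx y hy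
  have hmem : x - y ∈ vectorSpan ℝ S' := by
    simpa [vsub_eq_sub] using vsub_mem_vectorSpan ℝ hx hy
  have : x - y ∈ vectorSpan ℝ S := by
    have h1 := hpar
    unfold AreParallel at h1
    rw [direction_affineSpan, direction_affineSpan] at h1
    rwa [← h1] at hmem
  have := hker _ this
  rw [map_sub] at this
  linarith

end helpers

section topo

variable {E : Type*} [AddCommGroup E] [Module ℝ E] [TopologicalSpace E]
  [IsTopologicalAddGroup E] [ContinuousSMul ℝ E] [T2Space E] [FiniteDimensional ℝ E]

theorem maxFace_nonempty {S : Set E} (hS : IsCompact S) (hne : S.Nonempty)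
    (f : E →ₗ[ℝ] ℝ) : (maxFace S f).Nonempty := by
  obtain ⟨x, hxS, hx⟩ := hS.exists_isMaxOn hne f.continuous_of_finiteDimensional.continuousOn
  refine ⟨x, ?_⟩
  simp only [maxFace, Set.mem_setOf_eq]
  exact ⟨hxS, fun y hy => hx hy⟩

theorem isCompact_maxFace {S : Set E} (hS : IsCompact S) (f : E →ₗ[ℝ] ℝ) :
    IsCompact (maxFace S f) := by
  have hcl : IsClosed {x : E | ∀ y ∈ S, f y ≤ f x} := by
    have : {x : E | ∀ y ∈ S, f y ≤ f x} = ⋂ y ∈ S, {x | f y ≤ f x} := by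
      ext x; simp
    rw [this]
    exact isClosed_biInter fun y _ =>
      isClosed_le continuous_const f.continuous_of_finiteDimensional
  refine hS.of_isClosed_subset (hS.isClosed.inter hcl) ?_
  intro x hx
  simp only [maxFace, Set.mem_setOf_eq] at hx
  exact hx.1

end topo

section prism

variable {α : Type*} [AddCommGroup α] [Module ℝ α]

theorem prism_decomp (w : (α × ℝ) →ₗ[ℝ] ℝ) (q : α) (t : ℝ) :
    w (q, t) = w (q, 0) + t * w (0, 1) := by
  have h : (q, t) = (q, (0 : ℝ)) + t • ((0 : α), (1 : ℝ)) := by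
    simp [Prod.ext_iff]
  rw [h, map_add, map_smul, smul_eq_mul]

/-- Every nonempty face of a prism meets the top or the bottom. -/
theorem prism_face_meets {K : Set α} {σ : Set (α × ℝ)}
    (hσ : IsFaceOf (K ×ˢ Set.Icc (0 : ℝ) 1) σ) (hne : σ.Nonempty) :
    (σ ∩ (K ×ˢ ({1} : Set ℝ) ∪ K ×ˢ ({0} : Set ℝ))).Nonempty := by
  obtain ⟨w, rfl⟩ := hσ
  obtain ⟨⟨q, t⟩, hmem⟩ := hne
  obtain ⟨hqt, hmax⟩ := hmem
  obtain ⟨hqK, ht0, ht1⟩ : q ∈ K ∧ 0 ≤ t ∧ t ≤ 1 := by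
    have := hqt
    rw [Set.mem_prod] at this
    exact ⟨this.1, this.2.1, this.2.2⟩
  rcases le_total 0 (w (0, 1)) with hw2 | hw2
  · refine ⟨(q, 1), ⟨?_, ?_⟩, Or.inl (by simp [Set.mem_prod, hqK])⟩
    · exact Set.mem_prod.2 ⟨hqK, by norm_num⟩
    · intro y hy
      have h1 := prism_decomp w q t
      have h2 := prism_decomp w q 1
      have hmt := hmax (q, t) hqt
      have := hmax y hy
      nlinarith
  · refine ⟨(q, 0), ⟨?_, ?_⟩, Or.inr (by simp [Set.mem_prod, hqK])⟩
    · exact Set.mem_prod.2 ⟨hqK, by norm_num⟩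
    · intro y hy
      have h1 := prism_decomp w q t
      have h2 := prism_decomp w q 0
      have := hmax y hy
      nlinarith

/-- If a face of a prism meets both top and bottom, the vertical flip exchanges its
top and bottom parts. -/
theorem prism_face_flip {K : Set α} {σ : Set (α × ℝ)}
    (hσ : IsFaceOf (K ×ˢ Set.Icc (0 : ℝ) 1) σ)
    (h1 : (σ ∩ K ×ˢ ({1} : Set ℝ)).Nonempty) (h0 : (σ ∩ K ×ˢ ({0} : Set ℝ)).Nonempty) :
    σ ∩ K ×ˢ ({0} : Set ℝ) = (fun p : α × ℝ => (p.1, 1 - p.2)) '' (σ ∩ K ×ˢ ({1} : Set ℝ)) ∧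
    σ ∩ K ×ˢ ({1} : Set ℝ) = (fun p : α × ℝ => (p.1, 1 - p.2)) '' (σ ∩ K ×ˢ ({0} : Set ℝ)) := by
  obtain ⟨w, rfl⟩ := hσ
  obtain ⟨⟨a, a2⟩, ⟨⟨haP, hamax⟩, haK, ha2⟩⟩ := h1
  obtain ⟨⟨b, b2⟩, ⟨⟨hbP, hbmax⟩, hbK, hb2⟩⟩ := h0
  simp only [Set.mem_singleton_iff] at ha2 hb2
  subst ha2; subst hb2
  -- the vertical component of w vanishes
  have hw2 : w (0, 1) = 0 := by
    have hab : w (a, 1) = w (b, 0) := le_antisymm (hbmax _ haP) (hamax _ hbP)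
    have ha0 : ((a, (0:ℝ)) : α × ℝ) ∈ K ×ˢ Set.Icc (0:ℝ) 1 :=
      Set.mem_prod.2 ⟨haK, by norm_num⟩
    have hb1 : ((b, (1:ℝ)) : α × ℝ) ∈ K ×ˢ Set.Icc (0:ℝ) 1 :=
      Set.mem_prod.2 ⟨hbK, by norm_num⟩
    have h1 := hamax _ ha0
    have h2 := hamax _ hb1
    have e1 := prism_decomp w a 1
    have e2 := prism_decomp w b 1
    have e3 := prism_decomp w a 0
    have e4 := prism_decomp w b 0
    nlinarith
  have hmval : ∀ q : α, w (q, 1) = w (q, 0) := by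
    intro q
    have := prism_decomp w q 1
    rw [hw2] at this
    linarith [this]
  constructor
  · ext ⟨z, z2⟩
    constructor
    · rintro ⟨⟨hzP, hzmax⟩, hzK, hz2⟩
      simp only [Set.mem_singleton_iff] at hz2
      subst hz2
      refine ⟨(z, 1), ⟨⟨?_, ?_⟩, ?_⟩, by simp⟩
      · exact Set.mem_prod.2 ⟨hzK, by norm_num⟩
      · intro y hy
        rw [hmval z]
        exact hzmax y hy
      · exact Set.mem_prod.2 ⟨hzK, rfl⟩
    · rintro ⟨⟨p, p2⟩, ⟨⟨hpP, hpmax⟩, hpK, hp2⟩, heq⟩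
      simp only [Set.mem_singleton_iff] at hp2
      subst hp2
      simp only [Prod.ext_iff] at heq
      obtain ⟨hz1, hz2⟩ := heq
      subst hz1
      have : z2 = 0 := by linarith [hz2.symm]
      subst this
      refine ⟨⟨?_, ?_⟩, ?_⟩
      · exact Set.mem_prod.2 ⟨hpK, by norm_num⟩
      · intro y hy
        rw [← hmval p]
        exact hpmax y hy
      · exact Set.mem_prod.2 ⟨hpK, rfl⟩
  · ext ⟨z, z2⟩
    constructor
    · rintro ⟨⟨hzP, hzmax⟩, hzK, hz2⟩
      simp only [Set.mem_singleton_iff] at hz2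
      subst hz2
      refine ⟨(z, 0), ⟨⟨?_, ?_⟩, ?_⟩, by simp⟩
      · exact Set.mem_prod.2 ⟨hzK, by norm_num⟩
      · intro y hy
        rw [← hmval z]
        exact hzmax y hy
      · exact Set.mem_prod.2 ⟨hzK, rfl⟩
    · rintro ⟨⟨p, p2⟩, ⟨⟨hpP, hpmax⟩, hpK, hp2⟩, heq⟩
      simp only [Set.mem_singleton_iff] at hp2
      subst hp2
      simp only [Prod.ext_iff] at heq
      obtain ⟨hz1, hz2⟩ := heq
      subst hz1
      have : z2 = 1 := by linarith [hz2.symm]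
      subst this
      refine ⟨⟨?_, ?_⟩, ?_⟩
      · exact Set.mem_prod.2 ⟨hpK, by norm_num⟩
      · intro y hy
        rw [hmval p]
        exact hpmax y hy
      · exact Set.mem_prod.2 ⟨hpK, rfl⟩

end prism

section key

variable {E E' : Type*} [AddCommGroup E] [Module ℝ E] [TopologicalSpace E]
  [IsTopologicalAddGroup E] [ContinuousSMul ℝ E] [T2Space E] [FiniteDimensional ℝ E]
  [AddCommGroup E'] [Module ℝ E'] [TopologicalSpace E']
  [IsTopologicalAddGroup E'] [ContinuousSMul ℝ E'] [T2Space E'] [FiniteDimensional ℝ E']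

theorem key_lemma (P T B : Set E) (PR X Y : Set E') (r : Set E' → Set E')
    (hPc : IsCompact P) (hPRc : IsCompact PR) (hPRne : PR.Nonempty)
    (φ : {F : Set E' // IsFaceOf PR F} ≃o {F : Set E // IsFaceOf P F})
    (hX : IsFaceOf PR X) (hY : IsFaceOf PR Y)
    (hXT : (φ ⟨X, hX⟩).1 = T) (hYB : (φ ⟨Y, hY⟩).1 = B)
    (hTne : T.Nonempty) (hBne : B.Nonempty)
    (c : E →ₗ[ℝ] ℝ)
    (hcT : ∀ x ∈ T, ∀ y ∈ T, c x = c y) (hcB : ∀ x ∈ B, ∀ y ∈ B, c x = c y)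
    (hcTB : ∀ x ∈ T, ∀ y ∈ B, c x ≠ c y)
    (hmeet : ∀ σ : Set E', IsFaceOf PR σ → σ.Nonempty → (σ ∩ (X ∪ Y)).Nonempty)
    (hr : ∀ σ : Set E', IsFaceOf PR σ → (σ ∩ X).Nonempty → (σ ∩ Y).Nonempty →
      σ ∩ Y = r (σ ∩ X))
    (u v : E →ₗ[ℝ] ℝ) (huv : maxFace T u = maxFace T v) :
    maxFace B u = maxFace B v := by
  have hfaceT : IsFaceOf P T := hXT ▸ (φ ⟨X, hX⟩).2
  have hfaceB : IsFaceOf P B := hYB ▸ (φ ⟨Y, hY⟩).2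
  obtain ⟨wT, hwT⟩ := hfaceT
  obtain ⟨wB, hwB⟩ := hfaceB
  have hTP : T ⊆ P := hwT ▸ maxFace_subset P wT
  have hBP : B ⊆ P := hwB ▸ maxFace_subset P wB
  have hPne : P.Nonempty := ⟨hTne.choose, hTP hTne.choose_spec⟩
  have hTc : IsCompact T := hwT ▸ isCompact_maxFace hPc wT
  have hBc : IsCompact B := hwB ▸ isCompact_maxFace hPc wB
  have hφX : φ ⟨X, hX⟩ = ⟨T, ⟨wT, hwT⟩⟩ := Subtype.ext hXT
  have hφY : φ ⟨Y, hY⟩ = ⟨B, ⟨wB, hwB⟩⟩ := Subtype.ext hYB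
  -- the main construction, for a single functional
  have main : ∀ u : E →ₗ[ℝ] ℝ, ∃ (h1 : IsFaceOf P (maxFace T u))
      (h2 : IsFaceOf P (maxFace B u)),
      (φ.symm ⟨maxFace B u, h2⟩).1 = r ((φ.symm ⟨maxFace T u, h1⟩).1) := by
    intro u
    obtain ⟨t₀, ht₀⟩ := id hTne
    obtain ⟨b₀, hb₀⟩ := id hBne
    obtain ⟨xT, hxT⟩ := maxFace_nonempty hTc hTne u
    obtain ⟨xB, hxB⟩ := maxFace_nonempty hBc hBne u
    have hxTT : xT ∈ T := hxT.1
    have hxBB : xB ∈ B := hxB.1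
    set s : ℝ := (u xB - u xT) / (c t₀ - c b₀) with hs
    have hcne : c t₀ - c b₀ ≠ 0 := sub_ne_zero.2 (hcTB t₀ ht₀ b₀ hb₀)
    set f : E →ₗ[ℝ] ℝ := u + s • c with hf
    have hfeval : ∀ x, f x = u x + s * c x := fun x => by
      simp [hf, LinearMap.add_apply, LinearMap.smul_apply, smul_eq_mul]
    -- the two critical values agree
    have hval : f xT = f xB := by
      rw [hfeval, hfeval]
      have h1 : c xT = c t₀ := hcT xT hxTT t₀ ht₀
      have h2 : c xB = c b₀ := hcB xB hxBB b₀ hb₀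
      rw [h1, h2]
      have : s * (c t₀ - c b₀) = u xB - u xT := div_mul_cancel₀ _ hcne
      linarith
    -- f is maximized over T at xT, over B at xB
    have hfT : ∀ x ∈ T, f x ≤ f xT := by
      intro x hx
      rw [hfeval, hfeval]
      have h1 : c x = c xT := hcT x hx xT hxTT
      have h2 : u x ≤ u xT := hxT.2 x hx
      rw [h1]; linarith
    have hfB : ∀ x ∈ B, f x ≤ f xB := by
      intro x hx
      rw [hfeval, hfeval]
      have h1 : c x = c xB := hcB x hx xB hxBB
      have h2 : u x ≤ u xB := hxB.2 x hx
      rw [h1]; linarith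
    set G : Set E := maxFace P f with hG
    have hfaceG : IsFaceOf P G := ⟨f, rfl⟩
    set σ' : {F : Set E' // IsFaceOf PR F} := φ.symm ⟨G, hfaceG⟩ with hσ'
    have hφσ' : φ σ' = ⟨G, hfaceG⟩ := φ.apply_symm_apply _
    have hσ'ne : σ'.1.Nonempty := by
      obtain ⟨w', hw'⟩ := σ'.2
      rw [hw']
      exact maxFace_nonempty hPRc hPRne w'
    -- a nonempty face of PR maps to a nonempty face of P
    have himg : ∀ τ : {F : Set E' // IsFaceOf PR F}, (φ τ).1.Nonempty := by
      intro τ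
      obtain ⟨w', hw'⟩ := (φ τ).2
      rw [hw']
      exact maxFace_nonempty hPc hPne w'
    have himg' : ∀ τ : {F : Set E // IsFaceOf P F}, (φ.symm τ).1.Nonempty := by
      intro τ
      obtain ⟨w', hw'⟩ := (φ.symm τ).2
      rw [hw']
      exact maxFace_nonempty hPRc hPRne w'
    -- step: if G meets T then it meets B, and vice versa
    have stepTB : (G ∩ T).Nonempty → (G ∩ B).Nonempty := by
      rintro ⟨x₁, hx₁G, hx₁T⟩
      refine ⟨xB, ⟨hBP hxBB, ?_⟩, hxBB⟩
      intro y hy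
      calc f y ≤ f x₁ := hx₁G.2 y hy
        _ ≤ f xT := hfT x₁ hx₁T
        _ = f xB := hval
    have stepBT : (G ∩ B).Nonempty → (G ∩ T).Nonempty := by
      rintro ⟨x₁, hx₁G, hx₁B⟩
      refine ⟨xT, ⟨hTP hxTT, ?_⟩, hxTT⟩
      intro y hy
      calc f y ≤ f x₁ := hx₁G.2 y hy
        _ ≤ f xB := hfB x₁ hx₁B
        _ = f xT := hval.symm
    -- G meets T or B via the prism
    have hGTB : (G ∩ T).Nonempty ∧ (G ∩ B).Nonempty := by
      obtain ⟨z, hzσ, hzXY⟩ := hmeet σ'.1 σ'.2 hσ'ne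
      have transfer : ∀ (W : Set E') (hW : IsFaceOf PR W) (WP : Set E),
          (φ ⟨W, hW⟩).1 = WP → z ∈ W → (G ∩ WP).Nonempty := by
        intro W hW WP hWP hzW
        have hτne : (σ'.1 ∩ W).Nonempty := ⟨z, hzσ, hzW⟩
        have hτface : IsFaceOf PR (σ'.1 ∩ W) := isFaceOf_inter σ'.2 hW hτne
        set τ : {F : Set E' // IsFaceOf PR F} := ⟨σ'.1 ∩ W, hτface⟩ with hτ
        have hle1 : τ ≤ σ' := Set.inter_subset_left
        have hle2 : τ ≤ ⟨W, hW⟩ := Set.inter_subset_right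
        have h1 : (φ τ).1 ⊆ G := by
          have := φ.monotone hle1
          rw [hφσ'] at this
          exact this
        have hφW : φ ⟨W, hW⟩ = ⟨WP, hWP ▸ (φ ⟨W, hW⟩).2⟩ := Subtype.ext hWP
        have h2 : (φ τ).1 ⊆ WP := by
          have := φ.monotone hle2
          rw [hφW] at this
          exact this
        obtain ⟨y, hy⟩ := himg τ
        exact ⟨y, h1 hy, h2 hy⟩
      rcases hzXY with hz | hz
      · have hGT := transfer X hX T hXT hz
        exact ⟨hGT, stepTB hGT⟩
      · have hGB := transfer Y hY B hYB hz
        exact ⟨stepBT hGB, hGB⟩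
    obtain ⟨hGTne, hGBne⟩ := hGTB
    -- identify intersections with max faces
    have hGT_eq : G ∩ T = maxFace T u := by
      obtain ⟨x₁, hx₁⟩ := hGTne
      rw [maxFace_inter_of_mem hTP hx₁]
      exact maxFace_add_const hcT u s
    have hGB_eq : G ∩ B = maxFace B u := by
      obtain ⟨x₁, hx₁⟩ := hGBne
      rw [maxFace_inter_of_mem hBP hx₁]
      exact maxFace_add_const hcB u s
    have hGTface : IsFaceOf P (G ∩ T) := isFaceOf_inter hfaceG ⟨wT, hwT⟩ hGTne
    have hGBface : IsFaceOf P (G ∩ B) := isFaceOf_inter hfaceG ⟨wB, hwB⟩ hGBne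
    -- the pullback of G ∩ T is σ' ∩ X
    have pullback : ∀ (W : Set E') (hW : IsFaceOf PR W) (WP : Set E)
        (hWP : (φ ⟨W, hW⟩).1 = WP) (hGW : IsFaceOf P (G ∩ WP)),
        (φ.symm ⟨G ∩ WP, hGW⟩).1 = σ'.1 ∩ W := by
      intro W hW WP hWP hGW
      set L : {F : Set E' // IsFaceOf PR F} := φ.symm ⟨G ∩ WP, hGW⟩ with hL
      have hφW : φ ⟨W, hW⟩ = ⟨WP, hWP ▸ (φ ⟨W, hW⟩).2⟩ := Subtype.ext hWP
      have hsub1 : L.1 ⊆ σ'.1 := by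
        have h0 : (⟨G ∩ WP, hGW⟩ : {F : Set E // IsFaceOf P F}) ≤ ⟨G, hfaceG⟩ :=
          Set.inter_subset_left
        have := φ.symm.monotone h0
        exact this
      have hsub2 : L.1 ⊆ W := by
        have h0 : (⟨G ∩ WP, hGW⟩ : {F : Set E // IsFaceOf P F}) ≤
            ⟨WP, hWP ▸ (φ ⟨W, hW⟩).2⟩ := Set.inter_subset_right
        have h1 := φ.symm.monotone h0
        rw [← hφW, φ.symm_apply_apply] at h1
        exact h1
      have hLne : L.1.Nonempty := himg' _
      have hτne : (σ'.1 ∩ W).Nonempty := hLne.mono (Set.subset_inter hsub1 hsub2)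
      have hτface : IsFaceOf PR (σ'.1 ∩ W) := isFaceOf_inter σ'.2 hW hτne
      apply Set.Subset.antisymm (Set.subset_inter hsub1 hsub2)
      -- reverse inclusion
      have ha : (⟨σ'.1 ∩ W, hτface⟩ : {F : Set E' // IsFaceOf PR F}) ≤ σ' :=
        Set.inter_subset_left
      have hb : (⟨σ'.1 ∩ W, hτface⟩ : {F : Set E' // IsFaceOf PR F}) ≤ ⟨W, hW⟩ :=
        Set.inter_subset_right
      have ha' : (φ ⟨σ'.1 ∩ W, hτface⟩).1 ⊆ G := by
        have := φ.monotone ha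
        rw [hφσ'] at this
        exact this
      have hb' : (φ ⟨σ'.1 ∩ W, hτface⟩).1 ⊆ WP := by
        have := φ.monotone hb
        rw [hφW] at this
        exact this
      have hc' : φ ⟨σ'.1 ∩ W, hτface⟩ ≤ ⟨G ∩ WP, hGW⟩ :=
        Set.subset_inter ha' hb'
      have := φ.symm.monotone hc'
      rw [φ.symm_apply_apply] at this
      exact this
    have hpbT := pullback X hX T hXT (hGT_eq ▸ hGTface)
    have hpbB := pullback Y hY B hYB (hGB_eq ▸ hGBface)
    -- apply hr
    have hrr := hr σ'.1 σ'.2 (by rw [← hpbT]; exact himg' _) (by rw [← hpbB]; exact himg' _)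
    refine ⟨hGT_eq ▸ hGTface, hGB_eq ▸ hGBface, ?_⟩
    have e1 : (⟨maxFace T u, hGT_eq ▸ hGTface⟩ : {F : Set E // IsFaceOf P F}) =
        ⟨G ∩ T, hGTface⟩ := Subtype.ext hGT_eq.symm
    have e2 : (⟨maxFace B u, hGB_eq ▸ hGBface⟩ : {F : Set E // IsFaceOf P F}) =
        ⟨G ∩ B, hGBface⟩ := Subtype.ext hGB_eq.symm
    rw [e1, e2, hpbT, hpbB]
    exact hrr
  obtain ⟨h1u, h2u, hu⟩ := main u
  obtain ⟨h1v, h2v, hv⟩ := main v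
  have e1 : (⟨maxFace T u, h1u⟩ : {F : Set E // IsFaceOf P F}) = ⟨maxFace T v, h1v⟩ :=
    Subtype.ext huv
  have e2 : φ.symm ⟨maxFace B u, h2u⟩ = φ.symm ⟨maxFace B v, h2v⟩ := by
    apply Subtype.ext
    rw [hu, hv, e1]
  have e3 := φ.symm.injective e2
  exact congrArg Subtype.val e3

end key

/-- The top and bottom facets of a `d`-dimensional prismatoid are Minkowski
equivalent. -/
theorem prismatoid_top_bottom_minkowski_equivalent
    (d : ℕ) (P T B : Set (Fin d → ℝ)) (hP : IsPrismatoid d P T B) :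
    MinkowskiEquivalent T B := by
  obtain ⟨hlat, hdim, Q, hQpoly, hQdim, φ, ⟨hT, hTeq⟩, ⟨hB, hBeq⟩, hpar⟩ := hP
  by_cases hTB : T = B
  · intro u v; rw [hTB]
  intro u v
  -- compactness
  obtain ⟨V, hVlat, hPV⟩ := hlat
  have hPc : IsCompact P := hPV ▸ V.finite_toSet.isCompact_convexHull ℝ
  obtain ⟨VQ, hQV⟩ := hQpoly
  have hQc : IsCompact Q := hQV ▸ VQ.finite_toSet.isCompact_convexHull ℝ
  have hPRc : IsCompact (Q ×ˢ Set.Icc (0 : ℝ) 1) := hQc.prod isCompact_Icc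
  -- Q is nonempty
  have hQne : Q.Nonempty := by
    by_contra h
    rw [Set.not_nonempty_iff_eq_empty] at h
    apply hTB
    have hQQ : Q ×ˢ ({1} : Set ℝ) = Q ×ˢ ({0} : Set ℝ) := by rw [h]; simp
    rw [← hTeq, ← hBeq]
    exact congrArg (fun z => (φ z).1) (Subtype.ext hQQ)
  have hPRne : (Q ×ˢ Set.Icc (0 : ℝ) 1).Nonempty :=
    ⟨(hQne.choose, 0), Set.mem_prod.2 ⟨hQne.choose_spec, by norm_num⟩⟩
  -- T and B are faces of P
  have hfaceT : IsFaceOf P T := hTeq ▸ (φ ⟨_, hT⟩).2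
  have hfaceB : IsFaceOf P B := hBeq ▸ (φ ⟨_, hB⟩).2
  obtain ⟨wT, hwT⟩ := id hfaceT
  obtain ⟨wB, hwB⟩ := id hfaceB
  have hTP : T ⊆ P := hwT ▸ maxFace_subset P wT
  have hBP : B ⊆ P := hwB ▸ maxFace_subset P wB
  -- P is nonempty
  have hPne : P.Nonempty := by
    by_contra h
    rw [Set.not_nonempty_iff_eq_empty] at h
    apply hTB
    have hTe : T = ∅ := Set.subset_empty_iff.1 (h ▸ hTP)
    have hBe : B = ∅ := Set.subset_empty_iff.1 (h ▸ hBP)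
    rw [hTe, hBe]
  have hTne : T.Nonempty := hwT ▸ maxFace_nonempty hPc hPne wT
  have hBne : B.Nonempty := hwB ▸ maxFace_nonempty hPc hPne wB
  -- T and B are disjoint
  have hdisj : ∀ x, x ∈ T → x ∈ B → False := by
    intro x hxT hxB
    have hfaceTB : IsFaceOf P (T ∩ B) :=
      isFaceOf_inter ⟨wT, hwT⟩ ⟨wB, hwB⟩ ⟨x, hxT, hxB⟩
    set M := φ.symm ⟨T ∩ B, hfaceTB⟩ with hM
    have hφT : φ ⟨Q ×ˢ ({1} : Set ℝ), hT⟩ = ⟨T, hTeq ▸ (φ ⟨_, hT⟩).2⟩ := Subtype.ext hTeq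
    have hφB : φ ⟨Q ×ˢ ({0} : Set ℝ), hB⟩ = ⟨B, hBeq ▸ (φ ⟨_, hB⟩).2⟩ := Subtype.ext hBeq
    have h1 : M.1 ⊆ Q ×ˢ ({1} : Set ℝ) := by
      have h0 : (⟨T ∩ B, hfaceTB⟩ : {F : Set (Fin d → ℝ) // IsFaceOf P F}) ≤
          ⟨T, hTeq ▸ (φ ⟨_, hT⟩).2⟩ := Set.inter_subset_left
      have := φ.symm.monotone h0
      rw [← hφT, φ.symm_apply_apply] at this
      exact this
    have h2 : M.1 ⊆ Q ×ˢ ({0} : Set ℝ) := by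
      have h0 : (⟨T ∩ B, hfaceTB⟩ : {F : Set (Fin d → ℝ) // IsFaceOf P F}) ≤
          ⟨B, hBeq ▸ (φ ⟨_, hB⟩).2⟩ := Set.inter_subset_right
      have := φ.symm.monotone h0
      rw [← hφB, φ.symm_apply_apply] at this
      exact this
    obtain ⟨w', hw'⟩ := M.2
    have hMne : M.1.Nonempty := by
      rw [hw']
      exact maxFace_nonempty hPRc hPRne w'
    obtain ⟨z, hz⟩ := hMne
    have hz1 : z.2 ∈ ({1} : Set ℝ) := (Set.mem_prod.1 (h1 hz)).2
    have hz0 : z.2 ∈ ({0} : Set ℝ) := (Set.mem_prod.1 (h2 hz)).2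
    rw [Set.mem_singleton_iff] at hz1 hz0
    rw [hz1] at hz0
    norm_num at hz0
  -- constancy of the functionals
  have hwTT : ∀ x ∈ T, ∀ y ∈ T, wT x = wT y := by
    intro x hx y hy
    have hx' : x ∈ maxFace P wT := hwT ▸ hx
    have hy' : y ∈ maxFace P wT := hwT ▸ hy
    exact le_antisymm (hy'.2 x hx'.1) (hx'.2 y hy'.1)
  have hwBB : ∀ x ∈ B, ∀ y ∈ B, wB x = wB y := by
    intro x hx y hy
    have hx' : x ∈ maxFace P wB := hwB ▸ hx
    have hy' : y ∈ maxFace P wB := hwB ▸ hy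
    exact le_antisymm (hy'.2 x hx'.1) (hx'.2 y hy'.1)
  have hpar' : AreParallel B T := Eq.symm hpar
  have hwTB : ∀ x ∈ B, ∀ y ∈ B, wT x = wT y := constant_on_of_parallel hpar hwTT
  have hwBT : ∀ x ∈ T, ∀ y ∈ T, wB x = wB y := constant_on_of_parallel hpar' hwBB
  set c : (Fin d → ℝ) →ₗ[ℝ] ℝ := wT - wB with hc
  have hceval : ∀ x, c x = wT x - wB x := fun x => rfl
  have hc_constT : ∀ x ∈ T, ∀ y ∈ T, c x = c y := by
    intro x hx y hy
    rw [hceval, hceval, hwTT x hx y hy, hwBT x hx y hy]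
  have hc_constB : ∀ x ∈ B, ∀ y ∈ B, c x = c y := by
    intro x hx y hy
    rw [hceval, hceval, hwTB x hx y hy, hwBB x hx y hy]
  have hc_TB : ∀ x ∈ T, ∀ y ∈ B, c x ≠ c y := by
    intro x hx y hy
    have hx' : x ∈ maxFace P wT := hwT ▸ hx
    have hy' : y ∈ maxFace P wB := hwB ▸ hy
    have h1 : wT y ≤ wT x := hx'.2 y (hBP hy)
    have h2 : wB x ≤ wB y := hy'.2 x (hTP hx)
    have h1' : wT y ≠ wT x := by
      intro heq
      refine hdisj y ?_ hy
      rw [hwT]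
      exact ⟨hBP hy, fun z hz => (hx'.2 z hz).trans heq.ge⟩
    have h2' : wB x ≠ wB y := by
      intro heq
      refine hdisj x hx ?_
      rw [hwB]
      exact ⟨hTP hx, fun z hz => (hy'.2 z hz).trans heq.ge⟩
    rw [hceval, hceval]
    intro heq
    have := lt_of_le_of_ne h1 h1'
    have := lt_of_le_of_ne h2 h2'
    linarith
  -- the flip map on the prism space
  set r : Set ((Fin (d - 1) → ℝ) × ℝ) → Set ((Fin (d - 1) → ℝ) × ℝ) :=
    Set.image (fun p => (p.1, 1 - p.2)) with hrdef
  have hmeet1 : ∀ σ, IsFaceOf (Q ×ˢ Set.Icc (0 : ℝ) 1) σ → σ.Nonempty →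
      (σ ∩ (Q ×ˢ ({1} : Set ℝ) ∪ Q ×ˢ ({0} : Set ℝ))).Nonempty :=
    fun σ hσ hne => prism_face_meets hσ hne
  have hmeet2 : ∀ σ, IsFaceOf (Q ×ˢ Set.Icc (0 : ℝ) 1) σ → σ.Nonempty →
      (σ ∩ (Q ×ˢ ({0} : Set ℝ) ∪ Q ×ˢ ({1} : Set ℝ))).Nonempty := by
    intro σ hσ hne
    rw [Set.union_comm]
    exact prism_face_meets hσ hne
  have hr1 : ∀ σ, IsFaceOf (Q ×ˢ Set.Icc (0 : ℝ) 1) σ → (σ ∩ Q ×ˢ ({1} : Set ℝ)).Nonempty →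
      (σ ∩ Q ×ˢ ({0} : Set ℝ)).Nonempty →
      σ ∩ Q ×ˢ ({0} : Set ℝ) = r (σ ∩ Q ×ˢ ({1} : Set ℝ)) :=
    fun σ hσ h1 h0 => (prism_face_flip hσ h1 h0).1
  have hr2 : ∀ σ, IsFaceOf (Q ×ˢ Set.Icc (0 : ℝ) 1) σ → (σ ∩ Q ×ˢ ({0} : Set ℝ)).Nonempty →
      (σ ∩ Q ×ˢ ({1} : Set ℝ)).Nonempty →
      σ ∩ Q ×ˢ ({1} : Set ℝ) = r (σ ∩ Q ×ˢ ({0} : Set ℝ)) :=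
    fun σ hσ h0 h1 => (prism_face_flip hσ h1 h0).2
  have hc_BT : ∀ x ∈ B, ∀ y ∈ T, c x ≠ c y := fun x hx y hy => (hc_TB y hy x hx).symm
  constructor
  · intro huv
    exact key_lemma P T B (Q ×ˢ Set.Icc (0 : ℝ) 1) (Q ×ˢ ({1} : Set ℝ)) (Q ×ˢ ({0} : Set ℝ)) r hPc hPRc hPRne φ
      hT hB hTeq hBeq hTne hBne c hc_constT hc_constB hc_TB hmeet1 hr1 u v huv
  · intro huv
    exact key_lemma P B T (Q ×ˢ Set.Icc (0 : ℝ) 1) (Q ×ˢ ({0} : Set ℝ)) (Q ×ˢ ({1} : Set ℝ)) r hPc hPRc hPRne φ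
      hB hT hBeq hTeq hBne hTne c hc_constB hc_constT hc_BT hmeet2 hr2 u v huv
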